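/- For all real numbers a > 0 and b > 0, ∫_0^∞ (e^{-x^a} - 1/(1+x^b)) dx/x = -γ/a; in particular the value is independent of b. -/

import Mathlib

open MeasureTheory Real Set Filter

lemma gamma_log_integral :
    ∫ t in Set.Ioi (0:ℝ), Real.exp (-t) * Real.log t = -Real.eulerMascheroniConstant := by
  have h1 := Complex.hasDerivAt_GammaIntegral (s := 1) (by norm_num)
  have hmem : {s : ℂ | 0 < s.re} ∈ nhds (1 : ℂ) :=
    (isOpen_lt continuous_const Complex.continuous_re).mem_nhds (by norm_num)
  have h2 : HasDerivAt Complex.Gamma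
      (∫ t : ℝ in Set.Ioi 0, (t:ℂ) ^ (1 - 1 : ℂ) * (Real.log t * Real.exp (-t))) 1 := by
    apply h1.congr_of_eventuallyEq
    filter_upwards [hmem] with s hs
    exact Complex.Gamma_eq_integral hs
  have hint : (∫ t : ℝ in Set.Ioi 0, (t:ℂ) ^ (1 - 1 : ℂ) * (Real.log t * Real.exp (-t)))
      = ((∫ t : ℝ in Set.Ioi 0, Real.log t * Real.exp (-t) : ℝ) : ℂ) := by
    rw [show (∫ t : ℝ in Set.Ioi 0, (t:ℂ) ^ (1 - 1 : ℂ) * (Real.log t * Real.exp (-t)))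
        = ∫ t : ℝ in Set.Ioi 0, ((Real.log t * Real.exp (-t) : ℝ) : ℂ) from by
      apply setIntegral_congr_fun measurableSet_Ioi
      intro t _
      push_cast
      simp]
    exact integral_ofReal
  rw [hint] at h2
  have h3 := h2.real_of_complex
  have h4 : HasDerivAt Real.Gamma (∫ t : ℝ in Set.Ioi 0, Real.log t * Real.exp (-t)) 1 := by
    have : (fun x : ℝ => (Complex.Gamma x).re) = Real.Gamma := by
      ext x; rw [Complex.Gamma_ofReal]; simp
    rw [← this]
    simpa using h3
  have := h4.unique Real.hasDerivAt_Gamma_one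
  rw [← this]
  congr 1; ext t; ring

lemma int_rpow01 {r : ℝ} (hr : -1 < r) : IntegrableOn (fun x : ℝ => x ^ r) (Ioc 0 1) :=
  (intervalIntegral.intervalIntegrable_rpow' hr).1

lemma abs_log_le_near0 {x : ℝ} (hx : 0 < x) (hx1 : x ≤ 1) :
    |Real.log x| ≤ 2 * x ^ (-(1/2) : ℝ) := by
  have h0 : Real.log x ≤ 0 := Real.log_nonpos hx.le hx1
  rw [abs_of_nonpos h0]
  have h1 : Real.log (x ^ (-(1/2) : ℝ)) = -(1/2) * Real.log x := Real.log_rpow hx _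
  have h2 : Real.log (x ^ (-(1/2) : ℝ)) ≤ x ^ (-(1/2) : ℝ) - 1 :=
    Real.log_le_sub_one_of_pos (rpow_pos_of_pos hx _)
  have h3 : (0:ℝ) < x ^ (-(1/2) : ℝ) := rpow_pos_of_pos hx _
  nlinarith

lemma log_le_far {x : ℝ} (hx : 1 ≤ x) : Real.log x ≤ 2 * x ^ ((1/2) : ℝ) := by
  have hx0 : (0:ℝ) < x := lt_of_lt_of_le one_pos hx
  have h1 : Real.log (x ^ ((1/2) : ℝ)) = (1/2) * Real.log x := Real.log_rpow hx0 _
  have h2 : Real.log (x ^ ((1/2) : ℝ)) ≤ x ^ ((1/2) : ℝ) - 1 :=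
    Real.log_le_sub_one_of_pos (rpow_pos_of_pos hx0 _)
  have h3 : (0:ℝ) < x ^ ((1/2) : ℝ) := rpow_pos_of_pos hx0 _
  nlinarith

lemma I1 : IntegrableOn (fun x => Real.exp (-x) * Real.log x) (Ioi (0:ℝ)) := by
  rw [← Ioc_union_Ioi_eq_Ioi (zero_le_one)]
  apply IntegrableOn.union
  · apply Integrable.mono' ((int_rpow01 (r := -(1/2)) (by norm_num)).const_mul 2)
    · exact ((Real.measurable_exp.comp measurable_neg).mul Real.measurable_log).aestronglyMeasurable
    · filter_upwards [ae_restrict_mem measurableSet_Ioc] with x hx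
      have h1 : Real.exp (-x) ≤ 1 := Real.exp_le_one_iff.2 (by linarith [hx.1])
      have := abs_log_le_near0 hx.1 hx.2
      rw [norm_eq_abs, abs_mul, abs_of_pos (Real.exp_pos _)]
      nlinarith [abs_nonneg (Real.log x), Real.exp_pos (-x)]
  · apply Integrable.mono' ((exp_neg_integrableOn_Ioi 1 (by norm_num : (0:ℝ) < 1/2)).const_mul 2)
    · exact ((Real.measurable_exp.comp measurable_neg).mul Real.measurable_log).aestronglyMeasurable
    · filter_upwards [ae_restrict_mem measurableSet_Ioi] with x hx
      have hx1 : (1:ℝ) ≤ x := le_of_lt hx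
      have hl0 : 0 ≤ Real.log x := Real.log_nonneg hx1
      have hl : Real.log x ≤ x := (Real.log_le_sub_one_of_pos (by linarith)).trans (by linarith)
      have hxe : x ≤ 2 * Real.exp (x/2) := by
        have := Real.add_one_le_exp (x/2); linarith
      rw [norm_eq_abs, abs_mul, abs_of_pos (Real.exp_pos _), abs_of_nonneg hl0]
      calc Real.exp (-x) * Real.log x ≤ Real.exp (-x) * (2 * Real.exp (x/2)) := by
            nlinarith [Real.exp_pos (-x)]
        _ = 2 * Real.exp (-(1/2) * x) := by
            rw [mul_comm (Real.exp (-x)), mul_assoc, ← Real.exp_add]; ring_nf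
  done

lemma I2 : IntegrableOn (fun x => Real.log x / (1+x)^2) (Ioi (0:ℝ)) := by
  rw [← Ioc_union_Ioi_eq_Ioi (zero_le_one)]
  have hm : Measurable fun x : ℝ => Real.log x / (1+x)^2 :=
    Real.measurable_log.div (((measurable_const.add measurable_id').pow_const 2))
  apply IntegrableOn.union
  · apply Integrable.mono' ((int_rpow01 (r := -(1/2)) (by norm_num)).const_mul 2)
    · exact hm.aestronglyMeasurable
    · filter_upwards [ae_restrict_mem measurableSet_Ioc] with x hx
      have h2 : (1:ℝ) ≤ (1+x)^2 := by nlinarith [hx.1]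
      have := abs_log_le_near0 hx.1 hx.2
      rw [norm_eq_abs, abs_div, abs_of_pos (by nlinarith [hx.1] : (0:ℝ) < (1+x)^2)]
      calc |Real.log x| / (1+x)^2 ≤ |Real.log x| / 1 :=
            div_le_div_of_nonneg_left (abs_nonneg _) one_pos h2 |>.trans_eq rfl
        _ = |Real.log x| := div_one _
        _ ≤ 2 * x ^ (-(1/2) : ℝ) := this
  · apply Integrable.mono'
      ((integrableOn_Ioi_rpow_of_lt (by norm_num : (-(3/2):ℝ) < -1) one_pos).const_mul 2)
    · exact hm.aestronglyMeasurable
    · filter_upwards [ae_restrict_mem measurableSet_Ioi] with x hx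
      have hx1 : (1:ℝ) ≤ x := le_of_lt hx
      have hx0 : (0:ℝ) < x := by linarith
      have hl0 : 0 ≤ Real.log x := Real.log_nonneg hx1
      have hsq : x^2 ≤ (1+x)^2 := by nlinarith
      have hx2 : (0:ℝ) < x^2 := by positivity
      rw [norm_eq_abs, abs_div, abs_of_nonneg hl0, abs_of_pos (by nlinarith : (0:ℝ) < (1+x)^2)]
      calc Real.log x / (1+x)^2 ≤ (2 * x ^ ((1/2):ℝ)) / x^2 := by
            apply div_le_div₀ (by positivity) (log_le_far hx1) hx2 hsq
        _ = 2 * x ^ (-(3/2) : ℝ) := by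
            rw [mul_div_assoc]
            congr 1
            rw [show (x:ℝ)^2 = x ^ (2:ℝ) by rw [← rpow_natCast x 2]; norm_num,
              ← rpow_sub hx0]
            norm_num

lemma key_ub : ∀ x : ℝ, 0 < x → |Real.exp (-x) - 1/(1+x)| ≤ x^2 := by
    intro x hx
    have h1x : (0:ℝ) < 1 + x := by linarith
    have hle : Real.exp (-x) ≤ 1/(1+x) := by
      rw [le_div_iff₀ h1x]
      calc Real.exp (-x) * (1+x) ≤ Real.exp (-x) * Real.exp x := by
            nlinarith [Real.add_one_le_exp x, Real.exp_pos (-x)]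
        _ = 1 := by rw [← Real.exp_add]; simp
    have hge : 1 - x ≤ Real.exp (-x) := by have := Real.add_one_le_exp (-x); linarith
    rw [abs_of_nonpos (by linarith)]
    have h2 : 1/(1+x) - (1-x) ≤ x^2 := by
      rw [div_sub' h1x.ne', div_le_iff₀ h1x]; nlinarith
    linarith

lemma I3 : IntegrableOn (fun x => (Real.exp (-x) - 1/(1+x))/x) (Ioi (0:ℝ)) := by
  rw [← Ioc_union_Ioi_eq_Ioi (zero_le_one)]
  have hm : Measurable fun x : ℝ => (Real.exp (-x) - 1/(1+x))/x :=
    ((Real.measurable_exp.comp measurable_neg).sub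
      (measurable_const.div (measurable_const.add measurable_id'))).div measurable_id'
  have key : ∀ x : ℝ, 0 < x → |Real.exp (-x) - 1/(1+x)| ≤ x^2 := by
    intro x hx
    have h1x : (0:ℝ) < 1 + x := by linarith
    have hle : Real.exp (-x) ≤ 1/(1+x) := by
      rw [le_div_iff₀ h1x]
      calc Real.exp (-x) * (1+x) ≤ Real.exp (-x) * Real.exp x := by
            nlinarith [Real.add_one_le_exp x, Real.exp_pos (-x)]
        _ = 1 := by rw [← Real.exp_add]; simp
    have hge : 1 - x ≤ Real.exp (-x) := by have := Real.add_one_le_exp (-x); linarith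
    rw [abs_of_nonpos (by linarith)]
    have h2 : 1/(1+x) - (1-x) ≤ x^2 := by
      rw [div_sub' h1x.ne', div_le_iff₀ h1x]; nlinarith
    linarith
  have hconst : IntegrableOn (fun _ : ℝ => (1:ℝ)) (Ioc 0 1) :=
    integrableOn_const measure_Ioc_lt_top.ne
  apply IntegrableOn.union
  · apply Integrable.mono' hconst
    · exact hm.aestronglyMeasurable
    · filter_upwards [ae_restrict_mem measurableSet_Ioc] with x hx
      rw [norm_eq_abs, abs_div, abs_of_pos hx.1, div_le_iff₀ hx.1]
      calc |Real.exp (-x) - 1/(1+x)| ≤ x^2 := key x hx.1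
        _ ≤ 1 * x := by nlinarith [hx.1, hx.2]
  · apply Integrable.mono'
      ((exp_neg_integrableOn_Ioi 1 one_pos).add
        (integrableOn_Ioi_rpow_of_lt (by norm_num : (-2:ℝ) < -1) one_pos))
    · exact hm.aestronglyMeasurable
    · filter_upwards [ae_restrict_mem measurableSet_Ioi] with x hx
      have hx1 : (1:ℝ) ≤ x := le_of_lt hx
      have hx0 : (0:ℝ) < x := by linarith
      have h1x : (0:ℝ) < 1 + x := by linarith
      have hinv : (0:ℝ) < 1/(1+x) := by positivity
      rw [norm_eq_abs, abs_div, abs_of_pos hx0, div_le_iff₀ hx0]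
      have htri : |Real.exp (-x) - 1/(1+x)| ≤ Real.exp (-x) + 1/(1+x) := by
        rw [abs_le]; constructor <;> nlinarith [Real.exp_pos (-x)]
      have hxm : x ^ (-2:ℝ) = 1/(x*x) := by
        rw [show (-2:ℝ) = -(2:ℕ) by norm_num, rpow_neg hx0.le, rpow_natCast]
        rw [one_div, sq]
      calc |Real.exp (-x) - 1/(1+x)| ≤ Real.exp (-x) + 1/(1+x) := htri
        _ ≤ (Real.exp (-1*x) + x ^ (-2:ℝ)) * x := by
            rw [hxm, show (-1:ℝ)*x = -x by ring, add_mul]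
            have e1 : Real.exp (-x) ≤ Real.exp (-x) * x :=
              le_mul_of_one_le_right (Real.exp_pos _).le hx1
            have e2 : 1/(1+x) ≤ 1/(x*x) * x := by
              rw [div_le_iff₀ h1x]
              rw [div_mul_eq_mul_div, div_mul_eq_mul_div, le_div_iff₀ (by positivity)]
              nlinarith
            linarith

lemma I4 {c : ℝ} (hc : 0 < c) :
    IntegrableOn (fun x => (1/(1+x) - 1/(1+x^c))/x) (Ioi (0:ℝ)) := by
  rw [← Ioc_union_Ioi_eq_Ioi (zero_le_one)]
  have hm : Measurable fun x : ℝ => (1/(1+x) - 1/(1+x^c))/x := by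
    apply Measurable.div _ measurable_id'
    apply Measurable.sub
    · exact measurable_const.div (measurable_const.add measurable_id')
    · exact measurable_const.div (measurable_const.add (measurable_id'.pow_const c))
  have hb : ∀ x : ℝ, 0 < x → |1/(1+x) - 1/(1+x^c)| ≤ x^c + x := by
    intro x hx
    have h1 : (0:ℝ) < 1 + x := by linarith
    have h2 : (0:ℝ) < x^c := rpow_pos_of_pos hx c
    have h3 : (0:ℝ) < 1 + x^c := by linarith
    have e1 : (0:ℝ) < 1/(1+x) := by positivity
    have e2 : (0:ℝ) < 1/(1+x^c) := by positivity
    have hid : 1/(1+x) - 1/(1+x^c) = (x^c - x)/((1+x)*(1+x^c)) := by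
      field_simp
      ring
    rw [hid, abs_div, abs_of_pos (by positivity : (0:ℝ) < (1+x)*(1+x^c))]
    calc |x^c - x| / ((1+x)*(1+x^c)) ≤ |x^c - x| / 1 :=
          div_le_div_of_nonneg_left (abs_nonneg _) one_pos (by nlinarith)
      _ = |x^c - x| := div_one _
      _ ≤ |x^c| + |x| := abs_sub _ _
      _ = x^c + x := by rw [abs_of_pos h2, abs_of_pos hx]
  apply IntegrableOn.union
  · apply Integrable.mono' ((int_rpow01 (by linarith : (-1:ℝ) < c - 1)).add
      (show IntegrableOn (fun _ : ℝ => (1:ℝ)) (Ioc 0 1) from integrableOn_const measure_Ioc_lt_top.ne))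
    · exact hm.aestronglyMeasurable
    · filter_upwards [ae_restrict_mem measurableSet_Ioc] with x hx
      have hx0 := hx.1
      rw [norm_eq_abs, abs_div, abs_of_pos hx0, div_le_iff₀ hx0]
      calc |1/(1+x) - 1/(1+x^c)| ≤ x^c + x := hb x hx0
        _ = (x ^ (c-1) + 1) * x := by
            rw [add_mul, one_mul, ← rpow_add_one hx0.ne' (c-1)]
            ring_nf
  · apply Integrable.mono'
      ((integrableOn_Ioi_rpow_of_lt (by norm_num : (-2:ℝ) < -1) one_pos).add
       (integrableOn_Ioi_rpow_of_lt (by linarith : -c + (-1) < -1) one_pos))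
    · exact hm.aestronglyMeasurable
    · filter_upwards [ae_restrict_mem measurableSet_Ioi] with x hx
      have hx1 : (1:ℝ) ≤ x := le_of_lt hx
      have hx0 : (0:ℝ) < x := by linarith
      have h1 : (0:ℝ) < 1 + x := by linarith
      have h2 : (0:ℝ) < x^c := rpow_pos_of_pos hx0 c
      have h3 : (0:ℝ) < 1 + x^c := by linarith
      rw [norm_eq_abs, abs_div, abs_of_pos hx0, div_le_iff₀ hx0]
      have tri : |1/(1+x) - 1/(1+x^c)| ≤ 1/(1+x) + 1/(1+x^c) := by
        have e1 : (0:ℝ) < 1/(1+x) := by positivity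
        have e2 : (0:ℝ) < 1/(1+x^c) := by positivity
        rw [abs_le]; constructor <;> nlinarith
      have b1 : 1/(1+x) ≤ x ^ (-2:ℝ) * x := by
        rw [show x ^ (-2:ℝ) = (x^(2:ℕ))⁻¹ by
          rw [← rpow_natCast x 2, ← rpow_neg hx0.le]; norm_num]
        rw [div_le_iff₀ h1, inv_mul_eq_div, div_mul_eq_mul_div, le_div_iff₀ (by positivity)]
        push_cast; nlinarith
      have b2 : 1/(1+x^c) ≤ x ^ (-c + (-1):ℝ) * x := by
        have he : x ^ (-c + (-1):ℝ) * x = x ^ (-c:ℝ) := by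
          rw [← rpow_add_one hx0.ne']; norm_num
        rw [he, rpow_neg hx0.le, one_div]
        exact inv_anti₀ h2 (by linarith)
      calc |1/(1+x) - 1/(1+x^c)| ≤ 1/(1+x) + 1/(1+x^c) := tri
        _ ≤ (x ^ (-2:ℝ) + x ^ (-c + (-1):ℝ)) * x := by rw [add_mul]; linarith

lemma inversion_zero {c : ℝ} (hc : 0 < c) :
    ∫ x in Ioi (0:ℝ), (1/(1+x) - 1/(1+x^c))/x = 0 := by
  set d : ℝ → ℝ := fun x => (1/(1+x) - 1/(1+x^c))/x with hd
  have key := integral_comp_rpow_Ioi d (p := -1) (by norm_num)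
  have congr1 : ∀ x ∈ Ioi (0:ℝ), (|(-1:ℝ)| * x ^ ((-1:ℝ) - 1)) • d (x ^ (-1:ℝ)) = -d x := by
    intro x hx
    have hx0 : (0:ℝ) < x := hx
    have h1 : (0:ℝ) < 1 + x := by linarith
    have h2 : (0:ℝ) < x ^ c := rpow_pos_of_pos hx0 c
    have h3 : (0:ℝ) < 1 + x ^ c := by linarith
    have hxinv : x ^ (-1:ℝ) = x⁻¹ := rpow_neg_one x
    have hxm : x ^ ((-1:ℝ) - 1) = (x^2)⁻¹ := by
      rw [show ((-1:ℝ) - 1) = -(2:ℕ) by norm_num, rpow_neg hx0.le, rpow_natCast]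
    simp only [hd, abs_neg, abs_one, one_mul, smul_eq_mul, hxinv, hxm]
    rw [show (x⁻¹) ^ c = (x ^ c)⁻¹ from by
      rw [← rpow_neg_one x, ← rpow_mul hx0.le]
      rw [show (-1) * c = -c by ring, rpow_neg hx0.le]]
    field_simp
    ring
  rw [setIntegral_congr_fun measurableSet_Ioi congr1] at key
  rw [integral_neg] at key
  linarith

lemma I2zero : ∫ x in Ioi (0:ℝ), Real.log x / (1+x)^2 = 0 := by
  set g : ℝ → ℝ := fun x => Real.log x / (1+x)^2 with hg
  have key := integral_comp_rpow_Ioi g (p := -1) (by norm_num)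
  have congr1 : ∀ x ∈ Ioi (0:ℝ), (|(-1:ℝ)| * x ^ ((-1:ℝ) - 1)) • g (x ^ (-1:ℝ)) = -g x := by
    intro x hx
    have hx0 : (0:ℝ) < x := hx
    have h1 : (0:ℝ) < 1 + x := by linarith
    have hxinv : x ^ (-1:ℝ) = x⁻¹ := rpow_neg_one x
    have hxm : x ^ ((-1:ℝ) - 1) = (x^2)⁻¹ := by
      rw [show ((-1:ℝ) - 1) = -(2:ℕ) by norm_num, rpow_neg hx0.le, rpow_natCast]
    simp only [hg, abs_neg, abs_one, one_mul, smul_eq_mul, hxinv, hxm,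
      Real.log_inv]
    field_simp
    ring
  rw [setIntegral_congr_fun measurableSet_Ioi congr1, integral_neg] at key
  linarith

lemma byparts :
    ∫ x in Ioi (0:ℝ), (Real.exp (-x) - 1/(1+x))/x = -Real.eulerMascheroniConstant := by
  set u : ℝ → ℝ := fun x => Real.exp (-x) - 1/(1+x) with hu_def
  set u' : ℝ → ℝ := fun x => -Real.exp (-x) + 1/(1+x)^2 with hu'_def
  have hu : ∀ x ∈ Ioi (0:ℝ), HasDerivAt u (u' x) x := by
    intro x hx
    have h1 : (1 + x) ≠ 0 := by simp only [mem_Ioi] at hx; positivity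
    have d1 : HasDerivAt (fun x : ℝ => Real.exp (-x)) (-Real.exp (-x)) x := by
      simpa [Function.comp_def] using (Real.hasDerivAt_exp (-x)).comp x (hasDerivAt_neg x)
    have d2 : HasDerivAt (fun x : ℝ => 1/(1+x)) (-(1/(1+x)^2)) x := by
      have := ((hasDerivAt_id x).const_add 1).inv h1
      simpa [one_div, neg_div, Pi.inv_def] using this
    have h := d1.sub d2
    simp only [hu_def, hu'_def]
    exact h.congr_deriv (by ring)
  have hv : ∀ x ∈ Ioi (0:ℝ), HasDerivAt Real.log x⁻¹ x := fun x hx =>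
    Real.hasDerivAt_log (ne_of_gt hx)
  have huv' : IntegrableOn (u * fun x => x⁻¹) (Ioi (0:ℝ)) := by
    apply I3.congr_fun _ measurableSet_Ioi
    intro x _; simp [hu_def, div_eq_mul_inv]
  have hu'v : IntegrableOn (u' * Real.log) (Ioi (0:ℝ)) := by
    have base : IntegrableOn
        (fun x => -(Real.exp (-x) * Real.log x) + Real.log x/(1+x)^2) (Ioi (0:ℝ)) :=
      I1.neg.add I2
    apply base.congr_fun _ measurableSet_Ioi
    intro x _; simp [hu'_def]; ring
  have h_zero : Tendsto (u * Real.log) (nhdsWithin 0 (Ioi (0:ℝ))) (nhds 0) := by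
    have hg : Tendsto (fun x : ℝ => ‖Real.log x * x ^ (2:ℝ)‖)
        (nhdsWithin 0 (Ioi (0:ℝ))) (nhds 0) := by
      simpa using (tendsto_log_mul_rpow_nhdsGT_zero two_pos).norm
    apply squeeze_zero_norm' ?_ hg
    filter_upwards [self_mem_nhdsWithin] with x hx
    have hx0 : (0:ℝ) < x := hx
    have h2 : x ^ (2:ℝ) = x^2 := by rw [← rpow_natCast x 2]; norm_num
    simp only [Pi.mul_apply, norm_mul, norm_eq_abs, h2]
    rw [abs_of_pos (by positivity : (0:ℝ) < x^2)]
    have hk := key_ub x hx0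
    have hu_eq : |u x| = |Real.exp (-x) - 1/(1+x)| := by rw [hu_def]
    rw [hu_eq]
    nlinarith [abs_nonneg (Real.log x), abs_nonneg (Real.exp (-x) - 1/(1+x))]
  have h_infty : Tendsto (u * Real.log) atTop (nhds 0) := by
    have T1 : Tendsto (fun x => Real.exp (-x) * Real.log x) atTop (nhds 0) := by
      have hg : Tendsto (fun x : ℝ => 2 * Real.exp (-(1/2) * x)) atTop (nhds 0) := by
        have h0 : Tendsto (fun x : ℝ => (1/2) * x) atTop atTop :=
          Tendsto.const_mul_atTop (by norm_num) tendsto_id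
        have h := (Real.tendsto_exp_neg_atTop_nhds_zero).comp h0
        have h2 := h.const_mul (2:ℝ)
        simpa [Function.comp] using h2
      apply squeeze_zero_norm' ?_ hg
      · filter_upwards [eventually_ge_atTop (1:ℝ)] with x hx1
        have hx0 : (0:ℝ) < x := by linarith
        have hl0 : 0 ≤ Real.log x := Real.log_nonneg hx1
        have hl : Real.log x ≤ x := (Real.log_le_sub_one_of_pos hx0).trans (by linarith)
        have hxe : x ≤ 2 * Real.exp (x/2) := by
          have := Real.add_one_le_exp (x/2); linarith
        rw [norm_eq_abs, abs_mul, abs_of_pos (Real.exp_pos _), abs_of_nonneg hl0]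
        calc Real.exp (-x) * Real.log x ≤ Real.exp (-x) * (2 * Real.exp (x/2)) := by
              nlinarith [Real.exp_pos (-x)]
          _ = 2 * Real.exp (-(1/2) * x) := by
              rw [mul_comm (Real.exp (-x)), mul_assoc, ← Real.exp_add]; ring_nf
    have T2 : Tendsto (fun x => Real.log x / (1+x)) atTop (nhds 0) := by
      have hg : Tendsto (fun x : ℝ => Real.log x / x) atTop (nhds 0) := by
        simpa using Real.isLittleO_log_id_atTop.tendsto_div_nhds_zero
      apply squeeze_zero_norm' ?_ hg
      filter_upwards [eventually_ge_atTop (1:ℝ)] with x hx1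
      have hx0 : (0:ℝ) < x := by linarith
      have h1 : (0:ℝ) < 1 + x := by linarith
      have hl0 : 0 ≤ Real.log x := Real.log_nonneg hx1
      rw [norm_eq_abs, abs_div, abs_of_nonneg hl0, abs_of_pos h1]
      apply div_le_div_of_nonneg_left hl0 hx0 (by linarith)
    have := T1.sub T2
    simp only [sub_zero] at this
    apply this.congr
    intro x
    simp only [Pi.mul_apply, hu_def]
    ring
  have main := integral_Ioi_mul_deriv_eq_deriv_mul hu hv huv' hu'v h_zero h_infty
  have e1 : ∫ x in Ioi (0:ℝ), u x * x⁻¹ = ∫ x in Ioi (0:ℝ), (Real.exp (-x) - 1/(1+x))/x := by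
    apply setIntegral_congr_fun measurableSet_Ioi
    intro x _; simp [hu_def, div_eq_mul_inv]
  have e2 : ∫ x in Ioi (0:ℝ), u' x * Real.log x = Real.eulerMascheroniConstant := by
    have : ∀ x ∈ Ioi (0:ℝ), u' x * Real.log x
        = -(Real.exp (-x) * Real.log x) + Real.log x/(1+x)^2 := by
      intro x _; simp [hu'_def]; ring
    rw [setIntegral_congr_fun measurableSet_Ioi this]
    have splitint : ∫ x in Ioi (0:ℝ), (-(Real.exp (-x) * Real.log x) + Real.log x/(1+x)^2)
        = (∫ x in Ioi (0:ℝ), -(Real.exp (-x) * Real.log x))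
          + ∫ x in Ioi (0:ℝ), Real.log x/(1+x)^2 := integral_add I1.neg I2
    rw [splitint, integral_neg, gamma_log_integral, I2zero]
    ring
  rw [e1, e2] at main
  rw [main]
  ring

lemma T1c {c : ℝ} (hc : 0 < c) :
    ∫ x in Ioi (0:ℝ), (Real.exp (-x) - 1/(1+x^c))/x = -Real.eulerMascheroniConstant := by
  have hsplit : ∀ x ∈ Ioi (0:ℝ), (Real.exp (-x) - 1/(1+x^c))/x
      = (Real.exp (-x) - 1/(1+x))/x + (1/(1+x) - 1/(1+x^c))/x := by
    intro x _; ring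
  rw [setIntegral_congr_fun measurableSet_Ioi hsplit,
    integral_add I3 (I4 hc), byparts, inversion_zero hc]
  ring

theorem integral_exp_rpow_sub_inv_one_add_rpow_div (a b : ℝ) (ha : 0 < a) (hb : 0 < b) :
    ∫ x in Set.Ioi (0 : ℝ), (Real.exp (-(x ^ a)) - 1 / (1 + x ^ b)) / x
      = -Real.eulerMascheroniConstant / a := by
  have hp : (a⁻¹ : ℝ) ≠ 0 := (inv_pos.2 ha).ne'
  have key := integral_comp_rpow_Ioi
    (fun x => (Real.exp (-(x ^ a)) - 1 / (1 + x ^ b)) / x) hp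
  rw [← key]
  have congr1 : ∀ x ∈ Ioi (0:ℝ),
      (|a⁻¹| * x ^ (a⁻¹ - 1)) • ((Real.exp (-((x ^ a⁻¹) ^ a)) - 1 / (1 + (x ^ a⁻¹) ^ b)) / (x ^ a⁻¹))
      = a⁻¹ • ((Real.exp (-x) - 1/(1+x^(b/a)))/x) := by
    intro x hx
    have hx0 : (0:ℝ) < x := hx
    have e1 : (x ^ a⁻¹) ^ a = x := by
      rw [← rpow_mul hx0.le, inv_mul_cancel₀ ha.ne', rpow_one]
    have e2 : (x ^ a⁻¹) ^ b = x ^ (b/a) := by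
      rw [← rpow_mul hx0.le, show a⁻¹ * b = b / a by ring]
    have e3 : x ^ (a⁻¹ - 1) = x ^ a⁻¹ * x⁻¹ := by
      rw [rpow_sub hx0, rpow_one, div_eq_mul_inv]
    have hpa : (0:ℝ) < x ^ a⁻¹ := rpow_pos_of_pos hx0 _
    rw [e1, e2, e3, abs_of_pos (inv_pos.2 ha)]
    rw [smul_eq_mul, smul_eq_mul]
    field_simp
  rw [setIntegral_congr_fun measurableSet_Ioi congr1, integral_smul, T1c (div_pos hb ha)]
  rw [smul_eq_mul]
  field_simp
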